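/- arXiv:1805.07798 — 3 statements merged into one kernel-verified Lean document; each statement's English description precedes it below -/
import Mathlib

section
/- Under the large stride assumption s ≥ ⌊r/2⌋+1 and ‖a‖₂ = 1, the minimum eigenvalue of P^a = Σ_{i,j} a_i a_j P_i P_jᵀ satisfies λ_min(P^a) ≥ 1 - cos(π/(k+1)), and the maximum eigenvalue satisfies λ_max(P^a) ≤ 2. -/
open Finset Matrix Real

lemma amgm_aux (t x y : ℝ) (ht : 0 < t) : 2 * (x * y) ≤ t * x ^ 2 + t⁻¹ * y ^ 2 := by
  have h1 := sq_nonneg (t * x - y)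
  have h2 : t * t⁻¹ = 1 := mul_inv_cancel₀ ht.ne'
  have h3 : (0:ℝ) < t⁻¹ := inv_pos.mpr ht
  nlinarith [mul_nonneg h3.le h1]

lemma sin_pos_aux (k n : ℕ) (h1 : 1 ≤ n) (h2 : n ≤ k + 1) :
    0 < Real.sin (n * (π / (k + 2))) := by
  have hθ : 0 < π / ((k:ℝ) + 2) := by positivity
  apply Real.sin_pos_of_pos_of_lt_pi
  · have : (1:ℝ) ≤ n := by exact_mod_cast h1
    nlinarith
  · have hn : (n:ℝ) < (k:ℝ) + 2 := by
      have : (n:ℝ) ≤ (k:ℝ) + 1 := by exact_mod_cast h2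
      linarith
    have hpos : (0:ℝ) < (k:ℝ) + 2 := by positivity
    calc (n:ℝ) * (π / ((k:ℝ)+2)) < ((k:ℝ)+2) * (π / ((k:ℝ)+2)) := by
          apply mul_lt_mul_of_pos_right hn hθ
      _ = π := by field_simp

lemma sin_zero_top (k : ℕ) : Real.sin (((k:ℝ)+2) * (π / ((k:ℝ)+2))) = 0 := by
  have hpos : ((k:ℝ) + 2) ≠ 0 := by positivity
  rw [mul_div_cancel₀ _ hpos, Real.sin_pi]

lemma chainBound (k : ℕ) (a : ℕ → ℝ) :
    ∑ i ∈ Finset.range k, 2 * (a i * a (i + 1)) ≤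
      2 * Real.cos (π / (k + 2)) * ∑ j ∈ Finset.range (k + 1), a j ^ 2 := by
  set θ := π / ((k:ℝ) + 2) with hθdef
  set b : ℕ → ℝ := fun n => Real.sin (n * θ) with hb
  have hbpos : ∀ n, 1 ≤ n → n ≤ k + 1 → 0 < b n := fun n h1 h2 => sin_pos_aux k n h1 h2
  set T : ℕ → ℝ := fun n => b (n+2) / b (n+1) * a n ^ 2 with hT
  set W : ℕ → ℝ := fun n => b n / b (n+1) * a n ^ 2 with hW
  have hstep : ∀ i ∈ Finset.range k,
      2 * (a i * a (i+1)) ≤ T i + W (i+1) := by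
    intro i hi
    rw [Finset.mem_range] at hi
    have h1 : 0 < b (i+1) := hbpos _ (by omega) (by omega)
    have h2 : 0 < b (i+2) := hbpos _ (by omega) (by omega)
    have := amgm_aux (b (i+2) / b (i+1)) (a i) (a (i+1)) (by positivity)
    rw [inv_div] at this
    simpa [hT, hW] using this
  have hsum := Finset.sum_le_sum hstep
  have hTk : T k = 0 := by
    have : b (k+2) = 0 := by
      show Real.sin (((k:ℕ)+2 : ℕ) * θ) = 0
      push_cast
      exact sin_zero_top k
    simp [hT, this]
  have hW0 : W 0 = 0 := by simp [hW, hb]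
  have hsplit : ∑ i ∈ Finset.range k, (T i + W (i+1))
      = ∑ i ∈ Finset.range (k+1), T i + ∑ i ∈ Finset.range (k+1), W i - T k - W 0 := by
    rw [Finset.sum_add_distrib, Finset.sum_range_succ, Finset.sum_range_succ' W]
    ring
  have hcoef : ∀ i ∈ Finset.range (k+1), T i + W i = 2 * Real.cos θ * a i ^ 2 := by
    intro i hi
    rw [Finset.mem_range] at hi
    have h1 : 0 < b (i+1) := hbpos _ (by omega) (by omega)
    have hkey : b (i+2) + b i = 2 * Real.cos θ * b (i+1) := by
      show Real.sin (((i:ℕ)+2 : ℕ) * θ) + Real.sin (i * θ) = 2 * Real.cos θ * Real.sin (((i:ℕ)+1 : ℕ) * θ)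
      push_cast
      have e1 : ((i:ℝ)+2) * θ = ((i:ℝ)+1) * θ + θ := by ring
      have e2 : (i:ℝ) * θ = ((i:ℝ)+1) * θ - θ := by ring
      rw [e1, e2, Real.sin_add, Real.sin_sub]
      ring
    have : T i + W i = (b (i+2) + b i) / b (i+1) * a i ^ 2 := by
      simp only [hT, hW]
      field_simp
    rw [this, hkey]
    field_simp
  calc ∑ i ∈ Finset.range k, 2 * (a i * a (i+1))
      ≤ ∑ i ∈ Finset.range k, (T i + W (i+1)) := hsum
    _ = ∑ i ∈ Finset.range (k+1), (T i + W i) - T k - W 0 := by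
        rw [hsplit, Finset.sum_add_distrib]
    _ = ∑ i ∈ Finset.range (k+1), (2 * Real.cos θ * a i ^ 2) := by
        rw [Finset.sum_congr rfl hcoef, hTk, hW0]; ring
    _ = 2 * Real.cos θ * ∑ j ∈ Finset.range (k+1), a j ^ 2 := by
        rw [Finset.mul_sum]

lemma chainBound_abs (k : ℕ) (a : ℕ → ℝ) (ha : ∑ j ∈ Finset.range (k + 1), a j ^ 2 = 1) :
    |∑ i ∈ Finset.range k, a i * a (i + 1)| ≤ Real.cos (π / (k + 2)) := by
  rw [abs_le]
  constructor
  · have h := chainBound k (fun n => (-1 : ℝ) ^ n * a n)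
    have hsq : ∑ j ∈ Finset.range (k+1), ((-1:ℝ)^j * a j) ^ 2 = 1 := by
      have : ∀ j ∈ Finset.range (k+1), ((-1:ℝ)^j * a j) ^ 2 = a j ^ 2 := by
        intro j _
        rw [mul_pow, ← pow_mul, mul_comm j 2, pow_mul]
        norm_num
      rw [Finset.sum_congr rfl this, ha]
    have hterm : ∀ i ∈ Finset.range k,
        2 * (((-1:ℝ)^i * a i) * ((-1:ℝ)^(i+1) * a (i+1))) = -(2 * (a i * a (i+1))) := by
      intro i _
      have : ((-1:ℝ)^i) * ((-1:ℝ)^i) = 1 := by rw [← mul_pow]; norm_num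
      rw [pow_succ]
      linear_combination (-2 * a i * a (i+1)) * this
    rw [Finset.sum_congr rfl hterm, Finset.sum_neg_distrib, hsq] at h
    rw [← Finset.mul_sum] at h
    linarith
  · have h := chainBound k a
    rw [ha, ← Finset.mul_sum] at h
    linarith

lemma Qform (r s : ℕ) (hr2s : r + 1 ≤ 2 * s) (y : ℕ → ℝ) (hy0 : ∀ n, r ≤ n → y n = 0)
    (I J : ℕ) :
    ∑ p ∈ Finset.range r, ∑ q ∈ Finset.range r,
        y p * ((if I * s + p = J * s + q then (1:ℝ) else 0) * y q)
    = (if I = J then ∑ q ∈ Finset.range r, y q ^ 2 else 0)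
      + (if J = I + 1 then ∑ q ∈ Finset.range r, y q * y (q + s) else 0)
      + (if I = J + 1 then ∑ q ∈ Finset.range r, y q * y (q + s) else 0) := by
  by_cases hij : I = J
  · subst hij
    have htrans : ∀ p ∈ Finset.range r, ∀ q ∈ Finset.range r,
        y p * ((if I * s + p = I * s + q then (1:ℝ) else 0) * y q)
        = if p = q then y p * y q else 0 := by
      intro p _ q _
      rw [if_congr (Nat.add_right_inj) rfl rfl]
      split_ifs <;> ring
    calc ∑ p ∈ Finset.range r, ∑ q ∈ Finset.range r,
            y p * ((if I * s + p = I * s + q then (1:ℝ) else 0) * y q)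
        = ∑ p ∈ Finset.range r, ∑ q ∈ Finset.range r, (if p = q then y p * y q else 0) := by
          apply Finset.sum_congr rfl; intro p hp
          exact Finset.sum_congr rfl (fun q hq => htrans p hp q hq)
      _ = ∑ p ∈ Finset.range r, y p ^ 2 := by
          apply Finset.sum_congr rfl; intro p hp
          rw [Finset.sum_ite_eq (Finset.range r) p (fun q => y p * y q), if_pos hp]
          ring
      _ = _ := by simp
  · by_cases hji : J = I + 1
    · subst hji
      have hIs : (I + 1) * s = I * s + s := by ring
      have htrans : ∀ p ∈ Finset.range r, ∀ q ∈ Finset.range r,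
          y p * ((if I * s + p = (I + 1) * s + q then (1:ℝ) else 0) * y q)
          = if p = s + q then y p * y q else 0 := by
        intro p _ q _
        have hcond : (I * s + p = (I + 1) * s + q) ↔ (p = s + q) := by
          rw [hIs, add_assoc, Nat.add_right_inj]
        rw [if_congr hcond rfl rfl]
        split_ifs <;> ring
      calc ∑ p ∈ Finset.range r, ∑ q ∈ Finset.range r,
              y p * ((if I * s + p = (I + 1) * s + q then (1:ℝ) else 0) * y q)
          = ∑ p ∈ Finset.range r, ∑ q ∈ Finset.range r, (if p = s + q then y p * y q else 0) := by
            apply Finset.sum_congr rfl; intro p hp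
            exact Finset.sum_congr rfl (fun q hq => htrans p hp q hq)
        _ = ∑ q ∈ Finset.range r, ∑ p ∈ Finset.range r, (if p = s + q then y p * y q else 0) :=
            Finset.sum_comm
        _ = ∑ q ∈ Finset.range r, y q * y (q + s) := by
            apply Finset.sum_congr rfl; intro q _
            rw [Finset.sum_ite_eq' (Finset.range r) (s + q) (fun p => y p * y q)]
            split_ifs with h
            · rw [add_comm s q]; ring
            · rw [Finset.mem_range, not_lt] at h
              rw [add_comm q s, hy0 _ h]; ring
        _ = _ := by
            rw [if_neg hij, if_pos rfl, if_neg (show ¬ I = I + 1 + 1 by omega)]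
            ring
    · by_cases hij' : I = J + 1
      · subst hij'
        have hJs : (J + 1) * s = J * s + s := by ring
        have htrans : ∀ p ∈ Finset.range r, ∀ q ∈ Finset.range r,
            y p * ((if (J + 1) * s + p = J * s + q then (1:ℝ) else 0) * y q)
            = if q = s + p then y p * y q else 0 := by
          intro p _ q _
          have hcond : ((J + 1) * s + p = J * s + q) ↔ (q = s + p) := by
            rw [hJs, add_assoc, Nat.add_right_inj]
            exact eq_comm
          rw [if_congr hcond rfl rfl]
          split_ifs <;> ring
        calc ∑ p ∈ Finset.range r, ∑ q ∈ Finset.range r,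
                y p * ((if (J + 1) * s + p = J * s + q then (1:ℝ) else 0) * y q)
            = ∑ p ∈ Finset.range r, ∑ q ∈ Finset.range r, (if q = s + p then y p * y q else 0) := by
              apply Finset.sum_congr rfl; intro p hp
              exact Finset.sum_congr rfl (fun q hq => htrans p hp q hq)
          _ = ∑ p ∈ Finset.range r, y p * y (p + s) := by
              apply Finset.sum_congr rfl; intro p _
              rw [Finset.sum_ite_eq' (Finset.range r) (s + p) (fun q => y p * y q)]
              split_ifs with h
              · rw [add_comm s p]
              · rw [Finset.mem_range, not_lt] at h
                rw [add_comm p s, hy0 _ h]; ring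
          _ = _ := by
              rw [if_neg hij, if_neg hji, if_pos rfl]
              simp only [zero_add]
      · have hfar : J + 2 ≤ I ∨ I + 2 ≤ J := by omega
        have htrans : ∀ p ∈ Finset.range r, ∀ q ∈ Finset.range r,
            y p * ((if I * s + p = J * s + q then (1:ℝ) else 0) * y q) = 0 := by
          intro p hp q hq
          rw [Finset.mem_range] at hp hq
          have hcond : ¬ (I * s + p = J * s + q) := by
            rcases hfar with h | h
            · have h1 : J * s + 2 * s ≤ I * s := by
                calc J * s + 2 * s = (J + 2) * s := by ring
                  _ ≤ I * s := Nat.mul_le_mul_right s h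
              intro heq; linarith
            · have h1 : I * s + 2 * s ≤ J * s := by
                calc I * s + 2 * s = (I + 2) * s := by ring
                  _ ≤ J * s := Nat.mul_le_mul_right s h
              intro heq; linarith
          rw [if_neg hcond]; ring
        rw [if_neg hij, if_neg hji, if_neg hij']
        simp only [add_zero]
        calc ∑ p ∈ Finset.range r, ∑ q ∈ Finset.range r,
                y p * ((if I * s + p = J * s + q then (1:ℝ) else 0) * y q)
            = ∑ p ∈ Finset.range r, ∑ q ∈ Finset.range r, (0:ℝ) := by
              apply Finset.sum_congr rfl; intro p hp
              exact Finset.sum_congr rfl (fun q hq => htrans p hp q hq)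
          _ = 0 := by simp

lemma Gbound (r s : ℕ) (hr2s : r + 1 ≤ 2 * s) (y : ℕ → ℝ) (hy0 : ∀ n, r ≤ n → y n = 0) :
    |2 * ∑ q ∈ Finset.range r, y q * y (q + s)| ≤ ∑ q ∈ Finset.range r, y q ^ 2 := by
  have hGs : ∑ q ∈ Finset.range r, y q * y (q + s)
      = ∑ q ∈ Finset.range (r - s), y q * y (q + s) := by
    refine (Finset.sum_subset (Finset.range_subset_range.mpr (by omega)) ?_).symm
    intro q hq hq'
    rw [Finset.mem_range] at hq hq'
    rw [hy0 (q + s) (by omega)]; ring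
  have hA : ∑ q ∈ Finset.range (r - s), y (q + s) ^ 2 = ∑ m ∈ Finset.Ico s r, y m ^ 2 := by
    rw [Finset.sum_Ico_eq_sum_range]
    apply Finset.sum_congr rfl
    intro q _
    rw [add_comm s q]
  have hdisj : Disjoint (Finset.range (r - s)) (Finset.Ico s r) := by
    rw [Finset.disjoint_left]
    intro x hx hx2
    rw [Finset.mem_range] at hx
    rw [Finset.mem_Ico] at hx2
    omega
  have hsub : Finset.range (r - s) ∪ Finset.Ico s r ⊆ Finset.range r := by
    intro x hx
    rw [Finset.mem_union, Finset.mem_range, Finset.mem_Ico] at hx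
    rw [Finset.mem_range]
    omega
  have hXb : ∑ q ∈ Finset.range (r - s), y q ^ 2 + ∑ q ∈ Finset.range (r - s), y (q + s) ^ 2
      ≤ ∑ q ∈ Finset.range r, y q ^ 2 := by
    rw [hA, ← Finset.sum_union hdisj]
    apply Finset.sum_le_sum_of_subset_of_nonneg hsub
    intros; positivity
  have hexp1 : ∑ q ∈ Finset.range (r - s), (y q - y (q + s)) ^ 2
      = ∑ q ∈ Finset.range (r - s), y q ^ 2 + ∑ q ∈ Finset.range (r - s), y (q + s) ^ 2
        - 2 * ∑ q ∈ Finset.range (r - s), y q * y (q + s) := by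
    rw [Finset.mul_sum, ← Finset.sum_add_distrib, ← Finset.sum_sub_distrib]
    apply Finset.sum_congr rfl
    intros; ring
  have hexp2 : ∑ q ∈ Finset.range (r - s), (y q + y (q + s)) ^ 2
      = ∑ q ∈ Finset.range (r - s), y q ^ 2 + ∑ q ∈ Finset.range (r - s), y (q + s) ^ 2
        + 2 * ∑ q ∈ Finset.range (r - s), y q * y (q + s) := by
    rw [Finset.mul_sum, ← Finset.sum_add_distrib, ← Finset.sum_add_distrib]
    apply Finset.sum_congr rfl
    intros; ring
  have h1 : (0:ℝ) ≤ ∑ q ∈ Finset.range (r - s), (y q - y (q + s)) ^ 2 := by positivity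
  have h2 : (0:ℝ) ≤ ∑ q ∈ Finset.range (r - s), (y q + y (q + s)) ^ 2 := by positivity
  rw [hGs, abs_le]
  constructor <;> linarith

lemma collapse (k : ℕ) (b : ℕ → ℝ) (hb0 : b (k + 1) = 0) (X G : ℝ) :
    ∑ n ∈ Finset.range (k + 1), ∑ m ∈ Finset.range (k + 1), (b n * b m) *
      ((if n = m then X else 0) + (if m = n + 1 then G else 0) + (if n = m + 1 then G else 0))
    = (∑ n ∈ Finset.range (k + 1), b n ^ 2) * X
      + 2 * ((∑ n ∈ Finset.range k, b n * b (n + 1)) * G) := by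
  have e : ∀ n ∈ Finset.range (k+1), ∀ m ∈ Finset.range (k+1),
      (b n * b m) * ((if n = m then X else 0) + (if m = n + 1 then G else 0)
        + (if n = m + 1 then G else 0))
      = (if n = m then b n * b m * X else 0) + (if m = n + 1 then b n * b m * G else 0)
        + (if n = m + 1 then b n * b m * G else 0) := by
    intro n _ m _
    split_ifs <;> ring
  have hsplit : ∑ n ∈ Finset.range (k + 1), ∑ m ∈ Finset.range (k + 1), (b n * b m) *
      ((if n = m then X else 0) + (if m = n + 1 then G else 0) + (if n = m + 1 then G else 0))
      = (∑ n ∈ Finset.range (k+1), ∑ m ∈ Finset.range (k+1), (if n = m then b n * b m * X else 0))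
      + (∑ n ∈ Finset.range (k+1), ∑ m ∈ Finset.range (k+1), (if m = n + 1 then b n * b m * G else 0))
      + (∑ n ∈ Finset.range (k+1), ∑ m ∈ Finset.range (k+1), (if n = m + 1 then b n * b m * G else 0)) := by
    rw [← Finset.sum_add_distrib, ← Finset.sum_add_distrib]
    apply Finset.sum_congr rfl
    intro n hn
    rw [← Finset.sum_add_distrib, ← Finset.sum_add_distrib]
    exact Finset.sum_congr rfl (fun m hm => e n hn m hm)
  have hc' : ∑ n ∈ Finset.range (k+1), b n * b (n+1) = ∑ n ∈ Finset.range k, b n * b (n+1) := by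
    rw [Finset.sum_range_succ, hb0]
    ring
  have hB : ∀ n ∈ Finset.range (k+1),
      ∑ m ∈ Finset.range (k+1), (if m = n + 1 then b n * b m * G else 0) = b n * b (n+1) * G := by
    intro n hn
    rw [Finset.mem_range] at hn
    rw [Finset.sum_ite_eq' (Finset.range (k+1)) (n+1) (fun m => b n * b m * G)]
    split_ifs with h
    · rfl
    · rw [Finset.mem_range, not_lt] at h
      have hnk : n = k := by omega
      rw [hnk, hb0]
      ring
  have hA : ∀ n ∈ Finset.range (k+1),
      ∑ m ∈ Finset.range (k+1), (if n = m then b n * b m * X else 0) = b n ^ 2 * X := by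
    intro n hn
    rw [Finset.sum_ite_eq (Finset.range (k+1)) n (fun m => b n * b m * X), if_pos hn]
    ring
  rw [hsplit, Finset.sum_congr rfl hA, Finset.sum_congr rfl hB]
  have hC : ∑ n ∈ Finset.range (k+1), ∑ m ∈ Finset.range (k+1),
      (if n = m + 1 then b n * b m * G else 0)
      = ∑ m ∈ Finset.range (k+1), b m * b (m+1) * G := by
    rw [Finset.sum_comm]
    apply Finset.sum_congr rfl
    intro m hm
    rw [Finset.mem_range] at hm
    rw [Finset.sum_ite_eq' (Finset.range (k+1)) (m+1) (fun n => b n * b m * G)]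
    split_ifs with h
    · ring
    · rw [Finset.mem_range, not_lt] at h
      have hmk : m = k := by omega
      rw [hmk, hb0]
      ring
  rw [hC, ← Finset.sum_mul, ← Finset.sum_mul, hc']
  ring

lemma dot_sum_mulVec {ι : Type*} {r : ℕ} (t : Finset ι) (A : ι → Matrix (Fin r) (Fin r) ℝ)
    (x : Fin r → ℝ) :
    x ⬝ᵥ ((∑ i ∈ t, A i) *ᵥ x) = ∑ i ∈ t, x ⬝ᵥ (A i *ᵥ x) := by
  classical
  induction t using Finset.induction with
  | empty => simp
  | insert _ _ h ih =>
      rw [Finset.sum_insert h, Finset.sum_insert h, Matrix.add_mulVec, dotProduct_add, ih]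

/-- Eigenvalue bounds for the weighted patch matrix: under the large-stride assumption
`s ≥ ⌊r/2⌋ + 1` and for a unit vector `a`, every eigenvalue of
`Pᵃ = Σ_{i,j} a_i a_j P_i P_jᵀ` lies in `[1 - cos (π/(k+2)), 2]`. -/
theorem patch_matrix_eigenvalue_bounds
    {r s d k : ℕ} (hs : r / 2 + 1 ≤ s) (hd : k * s + r ≤ d)
    (a : Fin (k + 1) → ℝ) (ha : ∑ j, (a j) ^ 2 = 1)
    (P : Fin (k + 1) → Matrix (Fin r) (Fin d) ℝ)
    (hP : ∀ (j : Fin (k + 1)) (p : Fin r) (q : Fin d),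
      P j p q = if (q : ℕ) = (j : ℕ) * s + (p : ℕ) then 1 else 0)
    (hHerm : (∑ i, ∑ j, (a i * a j) • (P i * (P j)ᵀ)).IsHermitian) :
    ∀ i : Fin r,
      1 - Real.cos (π / (k + 2)) ≤ hHerm.eigenvalues i ∧ hHerm.eigenvalues i ≤ 2 := by
  classical
  have hr2s : r + 1 ≤ 2 * s := by omega
  -- entries of `P i * (P j)ᵀ`
  have hC : ∀ (i j : Fin (k+1)) (p q : Fin r),
      (P i * (P j)ᵀ) p q = if (i:ℕ)*s + (p:ℕ) = (j:ℕ)*s + (q:ℕ) then 1 else 0 := by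
    intro i j p q
    rw [Matrix.mul_apply]
    simp only [Matrix.transpose_apply, hP]
    by_cases h : (i:ℕ)*s + (p:ℕ) = (j:ℕ)*s + (q:ℕ)
    · rw [if_pos h]
      have hik : (i:ℕ) ≤ k := by have := i.isLt; omega
      have hlt : (i:ℕ)*s + (p:ℕ) < d := by
        have h1 : (i:ℕ)*s ≤ k*s := Nat.mul_le_mul_right s hik
        have h2 : (p:ℕ) < r := p.isLt
        omega
      rw [Finset.sum_eq_single (⟨(i:ℕ)*s + (p:ℕ), hlt⟩ : Fin d)]
      · simp [h]
      · intro m _ hm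
        have hne : (m:ℕ) ≠ (i:ℕ)*s + (p:ℕ) := by
          intro hc; exact hm (Fin.ext hc)
        rw [if_neg hne, zero_mul]
      · intro hmem; exact absurd (Finset.mem_univ _) hmem
    · rw [if_neg h]
      apply Finset.sum_eq_zero
      intro m _
      by_cases h1 : (m:ℕ) = (i:ℕ)*s + (p:ℕ)
      · have h2 : (m:ℕ) ≠ (j:ℕ)*s + (q:ℕ) := by omega
        rw [if_neg h2, mul_zero]
      · rw [if_neg h1, zero_mul]
  -- the extension of `a` to ℕ
  set b : ℕ → ℝ := fun n => if h : n < k + 1 then a ⟨n, h⟩ else 0 with hbdef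
  have hab : ∀ i : Fin (k+1), a i = b (i:ℕ) := by
    intro i; simp only [hbdef]; rw [dif_pos i.isLt]
  have hb0 : b (k+1) = 0 := by simp [hbdef]
  have hsum1 : ∑ n ∈ Finset.range (k+1), b n ^ 2 = 1 := by
    rw [← ha]
    rw [← Fin.sum_univ_eq_sum_range (fun n => b n ^ 2) (k+1)]
    apply Finset.sum_congr rfl
    intro i _
    rw [hab i]
  set c := ∑ n ∈ Finset.range k, b n * b (n+1) with hcdef
  have hc : |c| ≤ Real.cos (π / (k + 2)) := chainBound_abs k b hsum1
  have hcos1 : Real.cos (π / ((k:ℝ) + 2)) ≤ 1 := Real.cos_le_one _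
  -- the quadratic form bound
  have quad : ∀ x : Fin r → ℝ,
      (1 - Real.cos (π / (k + 2))) * (x ⬝ᵥ x)
          ≤ x ⬝ᵥ ((∑ i, ∑ j, (a i * a j) • (P i * (P j)ᵀ)) *ᵥ x)
        ∧ x ⬝ᵥ ((∑ i, ∑ j, (a i * a j) • (P i * (P j)ᵀ)) *ᵥ x) ≤ 2 * (x ⬝ᵥ x) := by
    intro x
    set y : ℕ → ℝ := fun n => if h : n < r then x ⟨n, h⟩ else 0 with hydef
    have hyx : ∀ p : Fin r, x p = y (p:ℕ) := by
      intro p; simp [hydef, p.isLt]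
    have hy0 : ∀ n, r ≤ n → y n = 0 := by
      intro n hn; simp only [hydef]; rw [dif_neg (by omega)]
    set X := ∑ q ∈ Finset.range r, y q ^ 2 with hXdef
    set G := ∑ q ∈ Finset.range r, y q * y (q + s) with hGdef
    have hxx : x ⬝ᵥ x = X := by
      rw [dotProduct]
      simp only [hyx]
      rw [Fin.sum_univ_eq_sum_range (fun n => y n * y n) r]
      apply Finset.sum_congr rfl
      intros; ring
    have hX0 : 0 ≤ X := by positivity
    -- quadratic form of each `P i * (P j)ᵀ`
    have hQfin : ∀ i j : Fin (k+1), x ⬝ᵥ ((P i * (P j)ᵀ) *ᵥ x)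
        = (if (i:ℕ) = (j:ℕ) then X else 0) + (if (j:ℕ) = (i:ℕ) + 1 then G else 0)
          + (if (i:ℕ) = (j:ℕ) + 1 then G else 0) := by
      intro i j
      have step1 : x ⬝ᵥ ((P i * (P j)ᵀ) *ᵥ x)
          = ∑ p ∈ Finset.range r, ∑ q ∈ Finset.range r,
              y p * ((if (i:ℕ)*s + p = (j:ℕ)*s + q then (1:ℝ) else 0) * y q) := by
        rw [dotProduct]
        simp only [Matrix.mulVec, dotProduct, hC, hyx]
        have inner : ∀ p : Fin r,
            (∑ q : Fin r, (if (i:ℕ)*s + (p:ℕ) = (j:ℕ)*s + (q:ℕ) then (1:ℝ) else 0) * y (q:ℕ))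
            = ∑ q ∈ Finset.range r, (if (i:ℕ)*s + (p:ℕ) = (j:ℕ)*s + q then (1:ℝ) else 0) * y q :=
          fun p => Fin.sum_univ_eq_sum_range
            (fun q => (if (i:ℕ)*s + (p:ℕ) = (j:ℕ)*s + q then (1:ℝ) else 0) * y q) r
        simp only [inner]
        rw [Fin.sum_univ_eq_sum_range
          (fun n => y n * ∑ q ∈ Finset.range r,
            (if (i:ℕ)*s + n = (j:ℕ)*s + q then (1:ℝ) else 0) * y q) r]
        apply Finset.sum_congr rfl
        intro p _
        rw [Finset.mul_sum]
      rw [step1]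
      exact Qform r s hr2s y hy0 (i:ℕ) (j:ℕ)
    -- the full quadratic form
    have hmain : x ⬝ᵥ ((∑ i, ∑ j, (a i * a j) • (P i * (P j)ᵀ)) *ᵥ x) = X + 2 * (c * G) := by
      rw [dot_sum_mulVec]
      have e1 : ∀ i : Fin (k+1),
          x ⬝ᵥ ((∑ j, (a i * a j) • (P i * (P j)ᵀ)) *ᵥ x)
          = ∑ j : Fin (k+1), (b (i:ℕ) * b (j:ℕ)) *
              ((if (i:ℕ) = (j:ℕ) then X else 0) + (if (j:ℕ) = (i:ℕ) + 1 then G else 0)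
                + (if (i:ℕ) = (j:ℕ) + 1 then G else 0)) := by
        intro i
        rw [dot_sum_mulVec]
        apply Finset.sum_congr rfl
        intro j _
        rw [Matrix.smul_mulVec, dotProduct_smul, smul_eq_mul, hQfin i j,
          hab i, hab j]
      rw [Finset.sum_congr rfl (fun i _ => e1 i)]
      have e2 : ∀ i : Fin (k+1),
          (∑ j : Fin (k+1), (b (i:ℕ) * b (j:ℕ)) *
            ((if (i:ℕ) = (j:ℕ) then X else 0) + (if (j:ℕ) = (i:ℕ) + 1 then G else 0)
              + (if (i:ℕ) = (j:ℕ) + 1 then G else 0)))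
          = ∑ m ∈ Finset.range (k+1), (b (i:ℕ) * b m) *
              ((if (i:ℕ) = m then X else 0) + (if m = (i:ℕ) + 1 then G else 0)
                + (if (i:ℕ) = m + 1 then G else 0)) :=
        fun i => Fin.sum_univ_eq_sum_range
          (fun m => (b (i:ℕ) * b m) *
            ((if (i:ℕ) = m then X else 0) + (if m = (i:ℕ) + 1 then G else 0)
              + (if (i:ℕ) = m + 1 then G else 0))) (k+1)
      rw [Finset.sum_congr rfl (fun i _ => e2 i)]
      rw [Fin.sum_univ_eq_sum_range
        (fun n => ∑ m ∈ Finset.range (k+1), (b n * b m) *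
          ((if n = m then X else 0) + (if m = n + 1 then G else 0)
            + (if n = m + 1 then G else 0))) (k+1)]
      rw [collapse k b hb0 X G, hsum1, hcdef]
      ring
    have hG2 : |2 * G| ≤ X := Gbound r s hr2s y hy0
    have habs : |c * (2 * G)| ≤ Real.cos (π / (k + 2)) * X := by
      rw [abs_mul]
      exact mul_le_mul hc hG2 (abs_nonneg _) ((abs_nonneg c).trans hc)
    have h2 := abs_le.mp habs
    have heq : 2 * (c * G) = c * (2 * G) := by ring
    rw [hxx, hmain]
    constructor
    · nlinarith [h2.1]
    · nlinarith [h2.2]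
  -- conclude via the eigenvector
  intro i0
  have key := quad (⇑(hHerm.eigenvectorBasis i0))
  have hv := hHerm.mulVec_eigenvectorBasis i0
  rw [hv, dotProduct_smul, smul_eq_mul] at key
  have hnorm : ‖hHerm.eigenvectorBasis i0‖ = 1 := hHerm.eigenvectorBasis.orthonormal.1 i0
  have hvv : (⇑(hHerm.eigenvectorBasis i0)) ⬝ᵥ (⇑(hHerm.eigenvectorBasis i0)) = 1 := by
    have h1 : (inner ℝ (hHerm.eigenvectorBasis i0) (hHerm.eigenvectorBasis i0) : ℝ) = 1 := by
      rw [real_inner_self_eq_norm_mul_norm, hnorm]; norm_num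
    rw [EuclideanSpace.inner_eq_star_dotProduct] at h1
    simpa using h1
  rw [hvv, mul_one, mul_one, mul_one] at key
  exact key
end

section
/- If ‖x‖₂² ≤ B almost surely under distribution Z, then E_{x~Z}[(f(w*, a*, x) - f(w, a, x))²] ≤ 2kB(‖a‖₂²‖w - w*‖₂² + ‖a - a*‖₂²‖w*‖₂²). -/
open Finset Matrix MeasureTheory

/-- Expected squared-loss bound (Lemma `loss`): if `‖x‖² ≤ B` almost surely under `Z`,
then `E[(f(w*,a*,x) - f(w,a,x))²] ≤ 2kB (‖a‖²‖w-w*‖² + ‖a-a*‖²‖w*‖²)`. -/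
theorem expected_loss_bound
    {r d k : ℕ} (σ : ℝ → ℝ)
    (hσLip : ∀ t u : ℝ, |σ t - σ u| ≤ |t - u|) (hσ0 : σ 0 = 0)
    (P : Fin k → Matrix (Fin r) (Fin d) ℝ)
    (hP : ∀ (j : Fin k) (x : Fin d → ℝ),
      ∑ p, ((P j).mulVec x p) ^ 2 ≤ ∑ q, (x q) ^ 2)
    (w wstar : Fin r → ℝ) (a astar : Fin k → ℝ)
    (Z : Measure (Fin d → ℝ)) [IsProbabilityMeasure Z] (B : ℝ)
    (hB : ∀ᵐ x ∂Z, ∑ q, (x q) ^ 2 ≤ B) :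
    ∫ x, ((∑ j, astar j * σ (wstar ⬝ᵥ (P j).mulVec x))
        - ∑ j, a j * σ (w ⬝ᵥ (P j).mulVec x)) ^ 2 ∂Z
      ≤ 2 * k * B * ((∑ j, (a j) ^ 2) * (∑ i, (w i - wstar i) ^ 2)
          + (∑ j, (a j - astar j) ^ 2) * (∑ i, (wstar i) ^ 2)) := by
  have hσcont : Continuous σ :=
    (LipschitzWith.of_dist_le_mul (K := 1) (fun t u => by
      rw [Real.dist_eq, Real.dist_eq, NNReal.coe_one, one_mul]
      exact hσLip t u)).continuous
  set A1 : ℝ := ∑ j, (a j) ^ 2 with hA1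
  set W1 : ℝ := ∑ i, (w i - wstar i) ^ 2 with hW1
  set A2 : ℝ := ∑ j, (a j - astar j) ^ 2 with hA2
  set W2 : ℝ := ∑ i, (wstar i) ^ 2 with hW2
  set C : ℝ := 2 * k * B * (A1 * W1 + A2 * W2) with hCdef
  set F : (Fin d → ℝ) → ℝ := fun x =>
    ((∑ j, astar j * σ (wstar ⬝ᵥ (P j).mulVec x))
        - ∑ j, a j * σ (w ⬝ᵥ (P j).mulVec x)) with hFdef
  have hA1n : 0 ≤ A1 := Finset.sum_nonneg fun _ _ => sq_nonneg _
  have hA2n : 0 ≤ A2 := Finset.sum_nonneg fun _ _ => sq_nonneg _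
  have hW1n : 0 ≤ W1 := Finset.sum_nonneg fun _ _ => sq_nonneg _
  have hW2n : 0 ≤ W2 := Finset.sum_nonneg fun _ _ => sq_nonneg _
  have sqle : ∀ u v : ℝ, |u| ≤ |v| → u ^ 2 ≤ v ^ 2 := by
    intro u v h
    calc u ^ 2 = |u| ^ 2 := (sq_abs _).symm
      _ ≤ |v| ^ 2 := pow_le_pow_left₀ (abs_nonneg _) h 2
      _ = v ^ 2 := sq_abs _
  have key : ∀ x : Fin d → ℝ, (∑ q, (x q) ^ 2) ≤ B → F x ^ 2 ≤ C := by
    intro x hx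
    set y : Fin k → Fin r → ℝ := fun j => (P j).mulVec x with hy
    have hyB : ∀ j, ∑ p, (y j p) ^ 2 ≤ B := fun j => (hP j x).trans hx
    have hyn : ∀ j, 0 ≤ ∑ p, (y j p) ^ 2 :=
      fun j => Finset.sum_nonneg fun _ _ => sq_nonneg _
    set s : Fin k → ℝ := fun j => σ (wstar ⬝ᵥ y j) with hs
    set t : Fin k → ℝ := fun j => σ (w ⬝ᵥ y j) with ht
    -- bound on (s j - t j)^2
    have hst : ∀ j, (s j - t j) ^ 2 ≤ W1 * B := by
      intro j
      have h1 : (s j - t j) ^ 2 ≤ ((wstar ⬝ᵥ y j) - (w ⬝ᵥ y j)) ^ 2 :=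
        sqle _ _ (hσLip _ _)
      have h2 : (wstar ⬝ᵥ y j) - (w ⬝ᵥ y j) = ∑ i, (wstar i - w i) * y j i := by
        simp only [dotProduct, ← Finset.sum_sub_distrib, sub_mul]
      have h3 : (∑ i, (wstar i - w i) * y j i) ^ 2
          ≤ (∑ i, (wstar i - w i) ^ 2) * ∑ i, (y j i) ^ 2 :=
        Finset.sum_mul_sq_le_sq_mul_sq _ _ _
      have h4 : (∑ i, (wstar i - w i) ^ 2) = W1 :=
        Finset.sum_congr rfl fun i _ => by ring
      calc (s j - t j) ^ 2 ≤ (∑ i, (wstar i - w i) * y j i) ^ 2 := by rwa [h2] at h1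
        _ ≤ (∑ i, (wstar i - w i) ^ 2) * ∑ i, (y j i) ^ 2 := h3
        _ = W1 * ∑ i, (y j i) ^ 2 := by rw [h4]
        _ ≤ W1 * B := mul_le_mul_of_nonneg_left (hyB j) hW1n
    -- bound on (s j)^2
    have hsb : ∀ j, (s j) ^ 2 ≤ W2 * B := by
      intro j
      have h1 : (s j) ^ 2 ≤ (wstar ⬝ᵥ y j) ^ 2 := by
        have := hσLip (wstar ⬝ᵥ y j) 0
        rw [hσ0, sub_zero, sub_zero] at this
        exact sqle _ _ this
      have h3 : (wstar ⬝ᵥ y j) ^ 2 ≤ W2 * ∑ i, (y j i) ^ 2 := by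
        simpa [dotProduct] using Finset.sum_mul_sq_le_sq_mul_sq Finset.univ wstar (y j)
      calc (s j) ^ 2 ≤ W2 * ∑ i, (y j i) ^ 2 := h1.trans h3
        _ ≤ W2 * B := mul_le_mul_of_nonneg_left (hyB j) hW2n
    have hdecomp : F x = (∑ j, (astar j - a j) * s j) + ∑ j, a j * (s j - t j) := by
      simp only [hFdef, hs, ht, hy]
      rw [← Finset.sum_add_distrib, ← Finset.sum_sub_distrib]
      exact Finset.sum_congr rfl fun j _ => by ring
    have hU : (∑ j, (astar j - a j) * s j) ^ 2 ≤ A2 * (k * (W2 * B)) := by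
      calc (∑ j, (astar j - a j) * s j) ^ 2
          ≤ (∑ j, (astar j - a j) ^ 2) * ∑ j, (s j) ^ 2 :=
            Finset.sum_mul_sq_le_sq_mul_sq _ _ _
        _ = A2 * ∑ j, (s j) ^ 2 := by
            rw [show (∑ j, (astar j - a j) ^ 2) = A2 from
              Finset.sum_congr rfl fun j _ => by ring]
        _ ≤ A2 * (k * (W2 * B)) := by
            apply mul_le_mul_of_nonneg_left _ hA2n
            calc ∑ j, (s j) ^ 2 ≤ ∑ _j : Fin k, W2 * B :=
                Finset.sum_le_sum fun j _ => hsb j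
              _ = k * (W2 * B) := by simp [mul_comm]
    have hV : (∑ j, a j * (s j - t j)) ^ 2 ≤ A1 * (k * (W1 * B)) := by
      calc (∑ j, a j * (s j - t j)) ^ 2
          ≤ A1 * ∑ j, (s j - t j) ^ 2 := Finset.sum_mul_sq_le_sq_mul_sq _ _ _
        _ ≤ A1 * (k * (W1 * B)) := by
            apply mul_le_mul_of_nonneg_left _ hA1n
            calc ∑ j, (s j - t j) ^ 2 ≤ ∑ _j : Fin k, W1 * B :=
                Finset.sum_le_sum fun j _ => hst j
              _ = k * (W1 * B) := by simp [mul_comm]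
    have hsum : F x ^ 2 ≤ 2 * (∑ j, (astar j - a j) * s j) ^ 2
        + 2 * (∑ j, a j * (s j - t j)) ^ 2 := by
      rw [hdecomp]
      nlinarith [sq_nonneg ((∑ j, (astar j - a j) * s j) - ∑ j, a j * (s j - t j))]
    calc F x ^ 2 ≤ 2 * (∑ j, (astar j - a j) * s j) ^ 2
        + 2 * (∑ j, a j * (s j - t j)) ^ 2 := hsum
      _ ≤ 2 * (A2 * (k * (W2 * B))) + 2 * (A1 * (k * (W1 * B))) := by
          linarith [hU, hV]
      _ = C := by rw [hCdef]; ring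
  have hFcont : Continuous F := by
    simp only [hFdef, Matrix.mulVec, dotProduct]
    fun_prop
  have hInt : Integrable (fun x => F x ^ 2) Z := by
    apply Integrable.mono' (integrable_const C)
      ((hFcont.pow 2).aestronglyMeasurable)
    filter_upwards [hB] with x hx
    rw [Real.norm_eq_abs, abs_of_nonneg (sq_nonneg _)]
    exact key x hx
  calc ∫ x, F x ^ 2 ∂Z ≤ ∫ _x, C ∂Z := by
        apply integral_mono_ae hInt (integrable_const C)
        filter_upwards [hB] with x hx
        exact key x hx
    _ = C := by simp
end

section
/- Under the same symmetric, identity-covariance, disjoint-patch assumptions, with y = Σ_j a*_j σ((w*_{non})ᵀ P_j^{non} x), we have E_x[(2/(1+α)) y Σ_j a_j P_j^{non} x] = (aᵀ a*) w*_{non}. -/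
open Finset MeasureTheory

/-- Under the same symmetric, identity-covariance, disjoint-patch assumptions, with
label `y = Σ_j a*_j σ((w*_non)ᵀ P_j^non x)`, we have
`E[(2/(1+α)) y Σ_j a_j P_j^non x] = (aᵀ a*) w*_non` (coordinatewise). -/
theorem stage1_label_moment
    {d m k : ℕ} (α : ℝ) (hα : 0 ≤ α) (hα1 : α < 1) (σ : ℝ → ℝ)
    (hσ : ∀ t : ℝ, σ t = if 0 ≤ t then t else α * t)
    (ind : Fin k → Fin m → Fin d)
    (hind : Function.Injective (fun jp : Fin k × Fin m => ind jp.1 jp.2))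
    (Z : Measure (Fin d → ℝ)) [IsProbabilityMeasure Z]
    (hsymm : Z.map (fun x => -x) = Z)
    (hcov : ∀ p q : Fin d, ∫ x, x p * x q ∂Z = if p = q then 1 else 0)
    (a astar : Fin k → ℝ) (wstar : Fin m → ℝ)
    (hInt : ∀ p : Fin m, Integrable (fun x =>
      (∑ j, astar j * σ (∑ q, wstar q * x (ind j q))) * (∑ j, a j * x (ind j p))) Z)
    (hIntLin : ∀ p : Fin m, Integrable (fun x =>
      (∑ j, astar j * ∑ q, wstar q * x (ind j q)) * (∑ j, a j * x (ind j p))) Z) :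
    ∀ p : Fin m,
      ∫ x, (2 / (1 + α)) * (∑ j, astar j * σ (∑ q, wstar q * x (ind j q)))
            * (∑ j, a j * x (ind j p)) ∂Z
        = (∑ j, a j * astar j) * wstar p := by
  intro p
  have hα1' : (0:ℝ) < 1 - α := by linarith
  have hαpos : (0:ℝ) < 1 + α := by linarith
  set L : (Fin d → ℝ) → ℝ := fun x => ∑ j, a j * x (ind j p) with hL
  set lin : (Fin d → ℝ) → ℝ := fun x => ∑ j, astar j * ∑ q, wstar q * x (ind j q) with hlinDef
  set ab : (Fin d → ℝ) → ℝ := fun x => ∑ j, astar j * |∑ q, wstar q * x (ind j q)| with habDef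
  -- decomposition of σ
  have hσdec : ∀ t : ℝ, σ t = (1 + α) / 2 * t + (1 - α) / 2 * |t| := by
    intro t
    rw [hσ]
    by_cases h : 0 ≤ t
    · rw [if_pos h, abs_of_nonneg h]; ring
    · rw [if_neg h, abs_of_neg (lt_of_not_ge h)]; ring
  have hy' : ∀ (c1 c2 : ℝ) (f g : Fin k → ℝ),
      ∑ j, astar j * (c1 * f j + c2 * g j)
        = c1 * ∑ j, astar j * f j + c2 * ∑ j, astar j * g j := by
    intro c1 c2 f g
    rw [Finset.mul_sum, Finset.mul_sum, ← Finset.sum_add_distrib]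
    exact Finset.sum_congr rfl fun j _ => by ring
  have hy : ∀ x, (∑ j, astar j * σ (∑ q, wstar q * x (ind j q)))
      = (1 + α) / 2 * lin x + (1 - α) / 2 * ab x := by
    intro x
    simp only [hσdec]
    exact hy' _ _ _ _
  -- integrability of ab * L
  have hI1 : Integrable (fun x => ab x * L x) Z := by
    apply Integrable.congr
      (((hInt p).sub ((hIntLin p).const_mul ((1 + α) / 2))).const_mul (2 / (1 - α)))
    filter_upwards with x
    simp only [Pi.sub_apply]
    rw [hy x]
    show 2 / (1 - α) * (((1 + α) / 2 * lin x + (1 - α) / 2 * ab x) * L x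
        - (1 + α) / 2 * ((∑ j, astar j * ∑ q, wstar q * x (ind j q)) * (∑ j, a j * x (ind j p)))) = ab x * L x
    show 2 / (1 - α) * (((1 + α) / 2 * lin x + (1 - α) / 2 * ab x) * L x
        - (1 + α) / 2 * (lin x * L x)) = ab x * L x
    field_simp
    try ring
  -- odd symmetry kills ab * L
  have hmeasneg : Measurable (fun x : Fin d → ℝ => -x) := measurable_neg
  have hodd : ∀ x : Fin d → ℝ, ab (-x) * L (-x) = -(ab x * L x) := by
    intro x
    have h1 : ab (-x) = ab x := by
      simp only [habDef]
      apply Finset.sum_congr rfl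
      intro j _
      congr 1
      rw [← abs_neg]
      congr 1
      simp [Finset.sum_neg_distrib, mul_neg, Finset.sum_congr, neg_neg]
    have h2 : L (-x) = -L x := by
      simp only [hL, ← Finset.sum_neg_distrib]
      apply Finset.sum_congr rfl
      intro j _
      simp
    rw [h1, h2]; ring
  have hzero : ∫ x, ab x * L x ∂Z = 0 := by
    have h1 : ∫ x, ab x * L x ∂Z = ∫ x, ab (-x) * L (-x) ∂Z := by
      conv_lhs => rw [← hsymm]
      rw [integral_map hmeasneg.aemeasurable]
      rw [hsymm]
      exact hI1.aestronglyMeasurable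
    have h2 : ∫ x, ab (-x) * L (-x) ∂Z = -∫ x, ab x * L x ∂Z := by
      simp only [hodd]
      exact integral_neg _
    linarith [h1.trans h2]
  -- second moments are integrable
  have hmeas : ∀ r : Fin d, Measurable fun x : Fin d → ℝ => x r := fun r =>
    measurable_pi_apply r
  have hsq : ∀ r : Fin d, Integrable (fun x => x r * x r) Z := by
    intro r
    by_contra h
    have h0 := integral_undef h
    rw [hcov r r] at h0
    simp at h0
  have hxx : ∀ r s : Fin d, Integrable (fun x => x r * x s) Z := by
    intro r s
    refine (((hsq r).add (hsq s)).const_mul (1/2)).mono'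
      (((hmeas r).mul (hmeas s)).aestronglyMeasurable)
      (Filter.Eventually.of_forall fun x => ?_)
    show |x r * x s| ≤ 1/2 * (x r * x r + x s * x s)
    rw [abs_mul]
    nlinarith [sq_nonneg (|x r| - |x s|), sq_abs (x r), sq_abs (x s)]
  -- evaluate the linear part
  have hiff : ∀ (j j' : Fin k) (q : Fin m), ind j q = ind j' p ↔ (j = j' ∧ q = p) := by
    intro j j' q
    constructor
    · intro h
      have := hind (a₁ := (j, q)) (a₂ := (j', p)) h
      exact ⟨congrArg Prod.fst this, congrArg Prod.snd this⟩
    · rintro ⟨rfl, rfl⟩; rfl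
  have hlin : ∫ x, lin x * L x ∂Z = (∑ j, a j * astar j) * wstar p := by
    have hexp : ∀ x : Fin d → ℝ, lin x * L x
        = ∑ j, ∑ j', ∑ q, (astar j * wstar q * a j') * (x (ind j q) * x (ind j' p)) := by
      intro x
      show (∑ j, astar j * ∑ q, wstar q * x (ind j q)) * (∑ j', a j' * x (ind j' p)) = _
      rw [Finset.sum_mul]
      apply Finset.sum_congr rfl; intro j _
      simp only [Finset.mul_sum, Finset.sum_mul]
      rw [Finset.sum_comm]
      rw [Finset.sum_comm]
      apply Finset.sum_congr rfl; intro j' _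
      apply Finset.sum_congr rfl; intro q _
      ring
    simp only [hexp]
    rw [integral_finset_sum]
    · have hinner : ∀ j : Fin k,
          (∫ x, ∑ j', ∑ q, (astar j * wstar q * a j') * (x (ind j q) * x (ind j' p)) ∂Z)
            = ∑ j', ∑ q, (astar j * wstar q * a j') * (if ind j q = ind j' p then (1:ℝ) else 0) := by
        intro j
        rw [integral_finset_sum]
        · apply Finset.sum_congr rfl; intro j' _
          rw [integral_finset_sum]
          · apply Finset.sum_congr rfl; intro q _
            rw [integral_const_mul, hcov]
          · intro q _
            exact (hxx _ _).const_mul _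
        · intro j' _
          exact integrable_finset_sum _ (fun q _ => (hxx _ _).const_mul _)
      simp only [hinner, hiff]
      simp only [ite_and, mul_ite, mul_one, mul_zero]
      rw [Finset.sum_mul]
      apply Finset.sum_congr rfl
      intro j _
      rw [Finset.sum_comm]
      simp [Finset.sum_ite_eq, Finset.sum_ite_eq']
      ring
    · intro j _
      exact integrable_finset_sum _ (fun j' _ =>
        integrable_finset_sum _ (fun q _ => (hxx _ _).const_mul _))
  -- combine
  have hfin : ∫ x, (2 / (1 + α)) * (∑ j, astar j * σ (∑ q, wstar q * x (ind j q)))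
      * (∑ j, a j * x (ind j p)) ∂Z
      = (2 / (1 + α)) * ∫ x, (∑ j, astar j * σ (∑ q, wstar q * x (ind j q)))
        * (∑ j, a j * x (ind j p)) ∂Z := by
    rw [← integral_const_mul]
    apply integral_congr_ae
    filter_upwards with x
    ring
  rw [hfin]
  have hsplit : ∫ x, (∑ j, astar j * σ (∑ q, wstar q * x (ind j q)))
      * (∑ j, a j * x (ind j p)) ∂Z
      = (1 + α) / 2 * ∫ x, lin x * L x ∂Z + (1 - α) / 2 * ∫ x, ab x * L x ∂Z := by
    rw [← integral_const_mul, ← integral_const_mul, ← integral_add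
      (((hIntLin p).const_mul _)) (hI1.const_mul _)]
    apply integral_congr_ae
    filter_upwards with x
    show (∑ j, astar j * σ (∑ q, wstar q * x (ind j q))) * L x
      = (1 + α) / 2 * (lin x * L x) + (1 - α) / 2 * (ab x * L x)
    rw [hy x]; ring
  rw [hsplit, hzero, hlin]
  field_simp
  try ring
end
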